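/- Let C be a hereditary abelian category with a tilting object T such that every object lies in Fac(T') for some tilting object T'. If an object X of C satisfies [X] = 0 in K_0(C), then X = 0. -/

import Mathlib

/-!
STATEMENT 3: Let `C` be a hereditary abelian `K`-category such that every object lies in
`Fac T` for some tilting object `T`.  If `[X] = 0` in `K₀(C)` then `X = 0`.
-/

open CategoryTheory CategoryTheory.Limits Opposite

attribute [local instance] CategoryTheory.Abelian.hasFiniteBiproducts

noncomputable section

universe v u

variable (K : Type*) [Field K]
variable (C : Type u) [Category.{v} C] [Abelian C] [Linear K C] [EnoughProjectives C]

/-- The subgroup of relations defining the Grothendieck group. -/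
def k0Rel : AddSubgroup (FreeAbelianGroup C) :=
  AddSubgroup.closure {x | ∃ S : ShortComplex C, S.ShortExact ∧
    x = FreeAbelianGroup.of S.X₂ - FreeAbelianGroup.of S.X₁ - FreeAbelianGroup.of S.X₃}

/-- The Grothendieck group `K₀(C)` of the abelian category `C`. -/
def K0 : Type u := FreeAbelianGroup C ⧸ k0Rel C

instance : AddCommGroup (K0 C) :=
  inferInstanceAs (AddCommGroup (FreeAbelianGroup C ⧸ k0Rel C))

variable {C}

/-- The class (dimension type) of an object in `K₀(C)`. -/
def k0cls (X : C) : K0 C := QuotientAddGroup.mk (FreeAbelianGroup.of X)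

/-- The first Ext space, as a `K`-module. -/
def ext1 (X Y : C) : ModuleCat K := ((Ext K C 1).obj (op X)).obj Y

/-- `X` is a quotient of a finite direct sum of copies of `T`. -/
def InFac (T X : C) : Prop :=
  ∃ (n : ℕ) (f : (⨁ fun _ : Fin n => T) ⟶ X), Epi f

/-- `T` is a tilting object: `Fac T = {X | Ext¹(T,X) = 0}`. -/
def IsTilting (T : C) : Prop :=
  ∀ X : C, InFac T X ↔ IsZero (ext1 K T X)

section EulerAux

variable {K : Type*} [Field K]
variable {C : Type u} [Category.{v} C] [Abelian C] [Linear K C] [EnoughProjectives C]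

open Module

def hcMap (P : ChainComplex C ℕ) {Y Z : C} (h : Y ⟶ Z) :
    P.linearYonedaObj K Y ⟶ P.linearYonedaObj K Z where
  f n := ModuleCat.ofHom (Linear.rightComp K _ h)
  comm' i j _ := by
    ext g
    exact (Category.assoc (obj := C) _ _ _).symm

def hcSC (P : ChainComplex C ℕ) (S : ShortComplex C) :
    ShortComplex (CochainComplex (ModuleCat K) ℕ) :=
  ShortComplex.mk (hcMap P S.f) (hcMap P S.g) (by
    ext n g
    show ((g : P.X n ⟶ S.X₁) ≫ S.f) ≫ S.g = (0 : _ →ₗ[K] _) g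
    exact (Category.assoc (obj := C) g S.f S.g).trans ((congrArg _ S.zero).trans Limits.comp_zero))

lemma hcSC_shortExact (P : ChainComplex C ℕ) (hP : ∀ n, Projective (P.X n)) (S : ShortComplex C)
    (hS : S.ShortExact) : (hcSC (K := K) P S).ShortExact := by
  apply HomologicalComplex.shortExact_of_degreewise_shortExact
  intro i
  have hmono : Mono S.f := hS.mono_f
  have hepi : Epi S.g := hS.epi_g
  haveI : Mono ((hcSC (K := K) P S).map (HomologicalComplex.eval _ _ i)).f := by
    rw [ModuleCat.mono_iff_injective]
    intro a b hab
    exact (cancel_mono S.f).1 hab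
  haveI : Epi ((hcSC (K := K) P S).map (HomologicalComplex.eval _ _ i)).g := by
    rw [ModuleCat.epi_iff_surjective]
    intro u
    have := hP i
    obtain ⟨v, hv⟩ := Projective.factors (u : P.X i ⟶ S.X₃) S.g
    exact ⟨v, hv⟩
  refine ⟨?_⟩
  rw [ShortComplex.moduleCat_exact_iff]
  intro u hu
  have hu' : (u : P.X i ⟶ S.X₂) ≫ S.g = 0 := hu
  exact ⟨hS.exact.lift u hu', hS.exact.lift_f u hu'⟩

open Module

lemma finrank_eq_of_iso {A B : ModuleCat K} (e : A ≅ B) :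
    Module.finrank K A = Module.finrank K B :=
  e.toLinearEquiv.finrank_eq

lemma subsingleton_of_isZero {A : ModuleCat K} (h : IsZero A) : Subsingleton A := by
  have h0 : ∀ a : A, a = 0 := by
    intro a
    have h1 : 𝟙 A = 0 := h.eq_of_src _ _
    calc a = (𝟙 A) a := rfl
    _ = (0 : A ⟶ A) a := by rw [h1]
    _ = 0 := rfl
  exact ⟨fun a b => by rw [h0 a, h0 b]⟩

lemma finrank_zero_of_isZero {A : ModuleCat K} (h : IsZero A) : Module.finrank K A = 0 := by
  have := subsingleton_of_isZero h
  exact Module.finrank_zero_of_subsingleton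

lemma isZero_of_finrank_zero {A : ModuleCat K} [FiniteDimensional K A]
    (h : Module.finrank K A = 0) : IsZero A := by
  have : Subsingleton A := Module.finrank_zero_iff.1 h
  exact ModuleCat.isZero_of_subsingleton A

lemma fd_of_iso {A B : ModuleCat K} (e : A ≅ B) [FiniteDimensional K B] :
    FiniteDimensional K A :=
  Module.Finite.equiv e.toLinearEquiv.symm

lemma fd_homology (M : CochainComplex (ModuleCat K) ℕ) (n : ℕ)
    (h : FiniteDimensional K (M.X n)) : FiniteDimensional K (M.homology n) := by
  haveI : FiniteDimensional K ((M.sc n).X₂) := h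
  haveI h3 : FiniteDimensional K
      (↥(LinearMap.ker (M.sc n).g.hom) ⧸ LinearMap.range (M.sc n).moduleCatToCycles) := inferInstance
  haveI h4 : FiniteDimensional K ↑(M.sc n).moduleCatLeftHomologyData.H := h3
  exact fd_of_iso ((M.sc n).moduleCatHomologyIso)

lemma alt_six {V0 V1 V2 V3 V4 V5 : ModuleCat K}
    [FiniteDimensional K V0] [FiniteDimensional K V1] [FiniteDimensional K V2]
    [FiniteDimensional K V3] [FiniteDimensional K V4] [FiniteDimensional K V5]
    (f1 : V0 ⟶ V1) (f2 : V1 ⟶ V2) (f3 : V2 ⟶ V3) (f4 : V3 ⟶ V4) (f5 : V4 ⟶ V5)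
    (h1 : Function.Injective f1) (e1 : LinearMap.range f1.hom = LinearMap.ker f2.hom)
    (e2 : LinearMap.range f2.hom = LinearMap.ker f3.hom) (e3 : LinearMap.range f3.hom = LinearMap.ker f4.hom)
    (e4 : LinearMap.range f4.hom = LinearMap.ker f5.hom) (h5 : Function.Surjective f5) :
    finrank K V0 + finrank K V2 + finrank K V4 = finrank K V1 + finrank K V3 + finrank K V5 := by
  have r2 := LinearMap.finrank_range_add_finrank_ker f2.hom
  have r3 := LinearMap.finrank_range_add_finrank_ker f3.hom
  have r4 := LinearMap.finrank_range_add_finrank_ker f4.hom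
  have r5 := LinearMap.finrank_range_add_finrank_ker f5.hom
  have h0 : finrank K V0 = finrank K (LinearMap.range f1.hom) :=
    (LinearMap.finrank_range_of_inj h1).symm
  have h5' : finrank K V5 = finrank K (LinearMap.range f5.hom) := by
    rw [LinearMap.range_eq_top.2 h5, finrank_top]
  rw [e1] at h0
  rw [e2] at r2
  rw [e3] at r3
  rw [e4] at r4
  omega


lemma mono_homologyMap₀ {A B : CochainComplex (ModuleCat K) ℕ} (φ : A ⟶ B) (hm : Mono (φ.f 0)) :
    Mono (HomologicalComplex.homologyMap φ 0) := by
  haveI := hm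
  haveI hcm : Mono (HomologicalComplex.cyclesMap φ 0) := by
    haveI : Mono (HomologicalComplex.cyclesMap φ 0 ≫ B.iCycles 0) := by
      rw [HomologicalComplex.cyclesMap_i]
      exact mono_comp _ _
    exact mono_of_mono _ (B.iCycles 0)
  haveI : IsIso (A.homologyπ 0) := CochainComplex.isIso_homologyπ₀ A
  haveI : IsIso (B.homologyπ 0) := CochainComplex.isIso_homologyπ₀ B
  have heq : HomologicalComplex.homologyMap φ 0 = inv (A.homologyπ 0) ≫
      HomologicalComplex.cyclesMap φ 0 ≫ B.homologyπ 0 := by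
    rw [← HomologicalComplex.homologyπ_naturality, IsIso.inv_hom_id_assoc]
  rw [heq]
  exact mono_comp _ _

/-- Euler number -/
def eulerNum (P : ChainComplex C ℕ) (Y : C) : ℤ :=
  (finrank K ((P.linearYonedaObj K Y).homology 0) : ℤ)
    - finrank K ((P.linearYonedaObj K Y).homology 1)

lemma euler_additive (P : ChainComplex C ℕ) (hP : ∀ n, Projective (P.X n))
    (hfd : ∀ (Y : C) (n : ℕ), FiniteDimensional K ((P.linearYonedaObj K Y).X n))
    (h2 : ∀ Y : C, IsZero ((P.linearYonedaObj K Y).homology 2))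
    (S : ShortComplex C) (hS : S.ShortExact)  :
    eulerNum (K := K) P S.X₂ = eulerNum (K := K) P S.X₁ + eulerNum (K := K) P S.X₃ := by
  classical
  have hS' : (hcSC (K := K) P S).ShortExact := hcSC_shortExact P hP S hS
  have hrel01 : (ComplexShape.up ℕ).Rel 0 1 := by simp
  have hrel12 : (ComplexShape.up ℕ).Rel 1 2 := by simp
  haveI fd0A : FiniteDimensional K ((hcSC (K := K) P S).X₁.homology 0) := fd_homology _ _ (hfd S.X₁ _)
  haveI fd0B : FiniteDimensional K ((hcSC (K := K) P S).X₂.homology 0) := fd_homology _ _ (hfd S.X₂ _)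
  haveI fd0D : FiniteDimensional K ((hcSC (K := K) P S).X₃.homology 0) := fd_homology _ _ (hfd S.X₃ _)
  haveI fd1A : FiniteDimensional K ((hcSC (K := K) P S).X₁.homology 1) := fd_homology _ _ (hfd S.X₁ _)
  haveI fd1B : FiniteDimensional K ((hcSC (K := K) P S).X₂.homology 1) := fd_homology _ _ (hfd S.X₂ _)
  haveI fd1D : FiniteDimensional K ((hcSC (K := K) P S).X₃.homology 1) := fd_homology _ _ (hfd S.X₃ _)
  have hmono : Mono (HomologicalComplex.homologyMap (hcSC (K := K) P S).f 0) := by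
    apply mono_homologyMap₀
    rw [ModuleCat.mono_iff_injective]
    intro x y hxy
    haveI := hS.mono_f
    exact (cancel_mono S.f).1 hxy
  have hepi : Epi (HomologicalComplex.homologyMap (hcSC (K := K) P S).g 1) := by
    have hz : hS'.δ 1 2 hrel12 = 0 := (h2 S.X₁).eq_of_tgt _ _
    exact (hS'.homology_exact₃ 1 2 hrel12).epi_f hz
  have e1 := (hS'.homology_exact₂ 0).moduleCat_range_eq_ker
  have e2 := (hS'.homology_exact₃ 0 1 hrel01).moduleCat_range_eq_ker
  have e3 := (hS'.homology_exact₁ 0 1 hrel01).moduleCat_range_eq_ker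
  have e4 := (hS'.homology_exact₂ 1).moduleCat_range_eq_ker
  have key := alt_six (HomologicalComplex.homologyMap (hcSC (K := K) P S).f 0)
    (HomologicalComplex.homologyMap (hcSC (K := K) P S).g 0) (hS'.δ 0 1 hrel01)
    (HomologicalComplex.homologyMap (hcSC (K := K) P S).f 1)
    (HomologicalComplex.homologyMap (hcSC (K := K) P S).g 1)
    ((ModuleCat.mono_iff_injective _).1 hmono) e1 e2 e3 e4
    ((ModuleCat.epi_iff_surjective _).1 hepi)
  have key' : finrank K ((P.linearYonedaObj K S.X₁).homology 0)
      + finrank K ((P.linearYonedaObj K S.X₃).homology 0)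
      + finrank K ((P.linearYonedaObj K S.X₂).homology 1)
      = finrank K ((P.linearYonedaObj K S.X₂).homology 0)
      + finrank K ((P.linearYonedaObj K S.X₁).homology 1)
      + finrank K ((P.linearYonedaObj K S.X₃).homology 1) := key
  simp only [eulerNum]
  omega


end EulerAux

theorem isZero_of_k0cls_eq_zero
    (hHomFin : ∀ X Y : C, FiniteDimensional K (X ⟶ Y))
    (hExtFin : ∀ X Y : C, FiniteDimensional K (ext1 K X Y))
    (hHereditary : ∀ (X Y : C) (n : ℕ), 2 ≤ n →
      IsZero (((Ext K C n).obj (op X)).obj Y))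
    (hT : ∀ X : C, ∃ T : C, IsTilting K T ∧ InFac T X)
    (X : C) (hX : k0cls X = (0 : K0 C)) :
    IsZero X := by
  classical
  obtain ⟨T, hTt, hTX⟩ := hT X
  obtain ⟨P⟩ := (HasProjectiveResolution.out (Z := T))
  have hfd : ∀ (Y : C) (n : ℕ), FiniteDimensional K ((P.complex.linearYonedaObj K Y).X n) :=
    fun Y n => hHomFin _ _
  have h2 : ∀ Y : C, IsZero ((P.complex.linearYonedaObj K Y).homology 2) :=
    fun Y => IsZero.of_iso (hHereditary T Y 2 le_rfl) (P.isoExt 2 Y).symm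
  set φ := FreeAbelianGroup.lift (fun Y : C => eulerNum (K := K) P.complex Y) with hφ
  have hker : k0Rel C ≤ φ.ker := by
    rw [k0Rel, AddSubgroup.closure_le]
    rintro x ⟨S, hS, rfl⟩
    simp only [SetLike.mem_coe, AddMonoidHom.mem_ker, map_sub, hφ, FreeAbelianGroup.lift_apply_of]
    rw [euler_additive P.complex P.projective hfd h2 S hS]
    ring
  have hmem : FreeAbelianGroup.of X ∈ k0Rel C := (QuotientAddGroup.eq_zero_iff _).mp hX
  have heuler : eulerNum (K := K) P.complex X = 0 := by
    have h := hker hmem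
    rw [AddMonoidHom.mem_ker, hφ, FreeAbelianGroup.lift_apply_of] at h
    exact h
  have hz1 : IsZero (ext1 K T X) := (hTt X).mp hTX
  have h1rank : Module.finrank K ((P.complex.linearYonedaObj K X).homology 1) = 0 := by
    have h := finrank_eq_of_iso (P.isoExt (R := K) 1 X).symm
    rw [h]
    exact finrank_zero_of_isZero hz1
  haveI fd0 : FiniteDimensional K ((P.complex.linearYonedaObj K X).homology 0) :=
    fd_homology _ _ (hfd X 0)
  have h0rank : Module.finrank K ((P.complex.linearYonedaObj K X).homology 0) = 0 := by
    rw [eulerNum] at heuler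
    omega
  have h0zero : IsZero ((P.complex.linearYonedaObj K X).homology 0) :=
    isZero_of_finrank_zero h0rank
  have hcyc : IsZero ((P.complex.linearYonedaObj K X).cycles 0) :=
    IsZero.of_iso h0zero (CochainComplex.isoHomologyπ₀ _)
  -- every map T ⟶ X is zero
  have hTrivial : ∀ g : T ⟶ X, g = 0 := by
    intro g
    let π0 : P.complex.X 0 ⟶ T := P.π.f 0
    have hd : P.complex.d 1 0 ≫ π0 = 0 := P.complex_d_comp_π_f_zero
    have hπ0 : Epi π0 := by
      show Epi (P.π.f 0)
      infer_instance
    let M := P.complex.linearYonedaObj K X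
    let A : ModuleCat K := ModuleCat.of K (T ⟶ X)
    let φm : A ⟶ M.X 0 := ModuleCat.ofHom (Linear.leftComp K X π0)
    have hnext : (ComplexShape.up ℕ).next 0 = 1 := (ComplexShape.up ℕ).next_eq' (by simp)
    have hφm : φm ≫ M.d 0 1 = 0 := by
      ext u
      show P.complex.d 1 0 ≫ (π0 ≫ u) = (0 : A ⟶ M.X 1) u
      rw [← Category.assoc, hd, zero_comp]
      rfl
    have hlift := M.liftCycles_i φm 1 hnext hφm
    have hz : M.liftCycles φm 1 hnext hφm = 0 := hcyc.eq_of_tgt _ _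
    rw [hz, zero_comp] at hlift
    have : φm g = 0 := by rw [← hlift]; rfl
    have hg : π0 ≫ g = 0 := this
    exact zero_of_epi_comp π0 hg
  obtain ⟨n, f, hf⟩ := hTX
  have hf0 : f = 0 := by
    apply biproduct.hom_ext'
    intro j
    rw [hTrivial (biproduct.ι (fun _ : Fin n => T) j ≫ f), comp_zero]
  rw [IsZero.iff_id_eq_zero]
  haveI := hf
  apply zero_of_epi_comp f
  rw [hf0, zero_comp]


end
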